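/- Define g : ℝ → ℝ by g(z) := z·(2Φ(z) − 1) + 2φ(z), where Φ and φ are the CDF and PDF of the standard normal distribution. Then g attains its global minimum uniquely at z = 0 with g(0) = √(2/π); that is, g(z) ≥ √(2/π) for all z ∈ ℝ, with equality if and only if z = 0. Consequently, for m ∈ ℝ, σ > 0 and y ∈ ℝ, the Gaussian CRPS satisfies σ·(g((y−m)/σ) − 1/√π) ≥ σ·(√2 − 1)/√π, with equality if and only if y = m. -/

import Mathlib

open MeasureTheory

/-- The probability density function of the standard normal distribution `N(0,1)`. -/
noncomputable def stdNormalPDF (u : ℝ) : ℝ :=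
  Real.exp (-u ^ 2 / 2) / Real.sqrt (2 * Real.pi)

/-- The cumulative distribution function of the standard normal distribution `N(0,1)`. -/
noncomputable def stdNormalCDF (z : ℝ) : ℝ :=
  ∫ u in Set.Iic z, stdNormalPDF u

/-- `g(z) := z·(2Φ(z) − 1) + 2φ(z)`. -/
noncomputable def gCRPS (z : ℝ) : ℝ :=
  z * (2 * stdNormalCDF z - 1) + 2 * stdNormalPDF z

lemma stdNormalPDF_eq (u : ℝ) :
    stdNormalPDF u = Real.exp (-(1/2) * u ^ 2) / Real.sqrt (2 * Real.pi) := by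
  rw [stdNormalPDF]; ring_nf

lemma stdNormalPDF_pos (u : ℝ) : 0 < stdNormalPDF u := by
  apply div_pos (Real.exp_pos _)
  exact Real.sqrt_pos.2 (by positivity)

lemma integrable_stdNormalPDF : Integrable stdNormalPDF := by
  have h := (integrable_exp_neg_mul_sq (show (0:ℝ) < 1/2 by norm_num)).div_const
    (Real.sqrt (2 * Real.pi))
  refine h.congr (Filter.Eventually.of_forall fun u => ?_)
  rw [stdNormalPDF_eq]

lemma continuous_stdNormalPDF : Continuous stdNormalPDF := by
  unfold stdNormalPDF
  fun_prop

lemma integral_stdNormalPDF : ∫ u, stdNormalPDF u = 1 := by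
  have h : ∫ u : ℝ, Real.exp (-(1/2) * u ^ 2) = Real.sqrt (2 * Real.pi) := by
    rw [integral_gaussian, show Real.pi / (1/2) = 2 * Real.pi by ring]
  have hs : (0:ℝ) < Real.sqrt (2 * Real.pi) := Real.sqrt_pos.2 (by positivity)
  calc ∫ u, stdNormalPDF u
      = (∫ u : ℝ, Real.exp (-(1/2) * u ^ 2)) / Real.sqrt (2 * Real.pi) := by
        rw [← integral_div]
        exact integral_congr_ae (Filter.Eventually.of_forall fun u => stdNormalPDF_eq u)
    _ = 1 := by rw [h]; exact div_self hs.ne'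

lemma stdNormalCDF_eq (z : ℝ) :
    stdNormalCDF z = stdNormalCDF 0 + ∫ u in (0:ℝ)..z, stdNormalPDF u := by
  rw [← intervalIntegral.integral_Iic_sub_Iic
    integrable_stdNormalPDF.integrableOn integrable_stdNormalPDF.integrableOn]
  simp [stdNormalCDF]

lemma hasDerivAt_stdNormalCDF (z : ℝ) :
    HasDerivAt stdNormalCDF (stdNormalPDF z) z := by
  have h : HasDerivAt (fun u => ∫ x in (0:ℝ)..u, stdNormalPDF x) (stdNormalPDF z) z :=
    (intervalIntegral.integral_hasStrictDerivAt_right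
      integrable_stdNormalPDF.intervalIntegrable
      (continuous_stdNormalPDF.stronglyMeasurableAtFilter _ _)
      continuous_stdNormalPDF.continuousAt).hasDerivAt
  have : stdNormalCDF = fun z => stdNormalCDF 0 + ∫ u in (0:ℝ)..z, stdNormalPDF u :=
    funext stdNormalCDF_eq
  rw [this]
  simpa using h.const_add (stdNormalCDF 0)

lemma stdNormalCDF_strictMono : StrictMono stdNormalCDF := by
  intro a b hab
  have h : 0 < ∫ u in a..b, stdNormalPDF u :=
    intervalIntegral.intervalIntegral_pos_of_pos
      integrable_stdNormalPDF.intervalIntegrable stdNormalPDF_pos hab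
  have := intervalIntegral.integral_Iic_sub_Iic
    integrable_stdNormalPDF.integrableOn integrable_stdNormalPDF.integrableOn (a := a) (b := b)
  have : stdNormalCDF b - stdNormalCDF a = ∫ u in a..b, stdNormalPDF u := this
  linarith

lemma stdNormalCDF_zero : stdNormalCDF 0 = 1 / 2 := by
  have heven : ∀ u : ℝ, stdNormalPDF (-u) = stdNormalPDF u := fun u => by
    simp [stdNormalPDF, neg_sq]
  have hsym : stdNormalCDF 0 = ∫ u in Set.Ioi (0:ℝ), stdNormalPDF u := by
    have h := integral_comp_neg_Iic (0:ℝ) stdNormalPDF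
    simp_rw [heven, neg_zero] at h
    rw [stdNormalCDF, h]
  have htot : stdNormalCDF 0 + ∫ u in Set.Ioi (0:ℝ), stdNormalPDF u = 1 := by
    rw [stdNormalCDF, intervalIntegral.integral_Iic_add_Ioi
      integrable_stdNormalPDF.integrableOn integrable_stdNormalPDF.integrableOn,
      integral_stdNormalPDF]
  linarith [hsym, htot]

lemma hasDerivAt_stdNormalPDF (z : ℝ) :
    HasDerivAt stdNormalPDF (-z * stdNormalPDF z) z := by
  have h1 : HasDerivAt (fun u : ℝ => -u ^ 2 / 2) (-z) z := by
    have := ((hasDerivAt_pow 2 z).neg).div_const 2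
    refine this.congr_deriv ?_
    ring
  have h2 := (h1.exp).div_const (Real.sqrt (2 * Real.pi))
  have : stdNormalPDF = fun u => Real.exp (-u ^ 2 / 2) / Real.sqrt (2 * Real.pi) := rfl
  rw [this]
  refine h2.congr_deriv ?_
  dsimp only
  ring

lemma hasDerivAt_gCRPS (z : ℝ) :
    HasDerivAt gCRPS (2 * stdNormalCDF z - 1) z := by
  have h1 : HasDerivAt (fun z : ℝ => z * (2 * stdNormalCDF z - 1))
      (1 * (2 * stdNormalCDF z - 1) + z * (2 * stdNormalPDF z)) z :=
    (hasDerivAt_id z).mul ((((hasDerivAt_stdNormalCDF z).const_mul 2)).sub_const 1)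
  have h2 := (hasDerivAt_stdNormalPDF z).const_mul 2
  have h := h1.add h2
  have heq : gCRPS = fun z => z * (2 * stdNormalCDF z - 1) + 2 * stdNormalPDF z := rfl
  rw [heq]
  refine h.congr_deriv ?_
  ring

lemma gCRPS_zero : gCRPS 0 = Real.sqrt (2 / Real.pi) := by
  have hpi : (0:ℝ) < Real.pi := Real.pi_pos
  rw [gCRPS, stdNormalPDF]
  have h2 : Real.sqrt (2 * Real.pi) = Real.sqrt 2 * Real.sqrt Real.pi :=
    Real.sqrt_mul (by norm_num) _
  rw [Real.sqrt_div (by norm_num : (0:ℝ) ≤ 2)]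
  have hs2 : (0:ℝ) < Real.sqrt 2 := Real.sqrt_pos.2 (by norm_num)
  have hsp : (0:ℝ) < Real.sqrt Real.pi := Real.sqrt_pos.2 hpi
  have h22 : Real.sqrt 2 * Real.sqrt 2 = 2 := Real.mul_self_sqrt (by norm_num)
  simp only [zero_mul, ne_eq, zero_pow, neg_zero, zero_div, Real.exp_zero]
  rw [h2]
  field_simp
  have he : Real.exp (-((0:ℝ) ^ 2 / 2)) = 1 := by norm_num
  nlinarith [h22, hs2, hsp, he]

lemma gCRPS_gt (z : ℝ) (hz : z ≠ 0) : gCRPS 0 < gCRPS z := by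
  have hcont : Continuous gCRPS := continuous_iff_continuousAt.2 fun x => (hasDerivAt_gCRPS x).continuousAt
  rcases hz.lt_or_gt with h | h
  · have hanti : StrictAntiOn gCRPS (Set.Iic 0) := by
      apply strictAntiOn_of_deriv_neg (convex_Iic 0) (hcont.continuousOn)
      intro x hx
      rw [interior_Iic] at hx
      rw [(hasDerivAt_gCRPS x).deriv]
      have : stdNormalCDF x < stdNormalCDF 0 := stdNormalCDF_strictMono hx
      rw [stdNormalCDF_zero] at this
      linarith
    exact hanti h.le Set.self_mem_Iic h
  · have hmono : StrictMonoOn gCRPS (Set.Ici 0) := by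
      apply strictMonoOn_of_deriv_pos (convex_Ici 0) (hcont.continuousOn)
      intro x hx
      rw [interior_Ici] at hx
      rw [(hasDerivAt_gCRPS x).deriv]
      have : stdNormalCDF 0 < stdNormalCDF x := stdNormalCDF_strictMono hx
      rw [stdNormalCDF_zero] at this
      linarith
    exact hmono Set.self_mem_Ici h.le h

/-- `g` attains its global minimum uniquely at `z = 0`, with `g(0) = √(2/π)`;
consequently, the Gaussian CRPS `σ·(g((y−m)/σ) − 1/√π)` is at least
`σ·(√2 − 1)/√π`, with equality iff `y = m`. -/
theorem g_min_at_zero :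
    gCRPS 0 = Real.sqrt (2 / Real.pi) ∧
    (∀ z : ℝ, Real.sqrt (2 / Real.pi) ≤ gCRPS z) ∧
    (∀ z : ℝ, gCRPS z = Real.sqrt (2 / Real.pi) ↔ z = 0) ∧
    (∀ m σ y : ℝ, 0 < σ →
      σ * (Real.sqrt 2 - 1) / Real.sqrt Real.pi ≤
        σ * (gCRPS ((y - m) / σ) - 1 / Real.sqrt Real.pi) ∧
      (σ * (gCRPS ((y - m) / σ) - 1 / Real.sqrt Real.pi) =
        σ * (Real.sqrt 2 - 1) / Real.sqrt Real.pi ↔ y = m)) := by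
  have hge : ∀ z : ℝ, Real.sqrt (2 / Real.pi) ≤ gCRPS z := by
    intro z
    rcases eq_or_ne z 0 with rfl | hz
    · rw [gCRPS_zero]
    · rw [← gCRPS_zero]; exact (gCRPS_gt z hz).le
  have hiff : ∀ z : ℝ, gCRPS z = Real.sqrt (2 / Real.pi) ↔ z = 0 := by
    intro z
    constructor
    · intro h
      by_contra hz
      have := gCRPS_gt z hz
      rw [gCRPS_zero, h] at this
      exact lt_irrefl _ this
    · rintro rfl; exact gCRPS_zero
  refine ⟨gCRPS_zero, hge, hiff, ?_⟩
  intro m σ y hσ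
  set w := (y - m) / σ with hw
  have hsp : (0:ℝ) < Real.sqrt Real.pi := Real.sqrt_pos.2 Real.pi_pos
  have hsqrt : Real.sqrt (2 / Real.pi) = Real.sqrt 2 / Real.sqrt Real.pi :=
    Real.sqrt_div (by norm_num) _
  have key : σ * (Real.sqrt 2 - 1) / Real.sqrt Real.pi
      = σ * (Real.sqrt (2 / Real.pi) - 1 / Real.sqrt Real.pi) := by
    rw [hsqrt]; field_simp
  constructor
  · rw [key]
    exact mul_le_mul_of_nonneg_left (sub_le_sub_right (hge w) _) hσ.le
  · rw [key]
    constructor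
    · intro h
      have h2 : gCRPS w - 1 / Real.sqrt Real.pi
          = Real.sqrt (2 / Real.pi) - 1 / Real.sqrt Real.pi :=
        mul_left_cancel₀ hσ.ne' h
      have h3 : gCRPS w = Real.sqrt (2 / Real.pi) := by linarith
      have h4 : w = 0 := (hiff w).1 h3
      have h5 : y - m = 0 := by
        rw [hw, div_eq_zero_iff] at h4
        rcases h4 with h5 | h5
        · exact h5
        · exact absurd h5 hσ.ne'
      linarith
    · intro h
      have hw0 : w = 0 := by rw [hw, h]; simp
      rw [hw0, (hiff 0).2 rfl]
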